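/- Let 0 < α ≤ β and let M := [α,β] × S² ⊂ ℝ × ℝ³. Then there exists a constant C > 0, independent of α and β, such that for all a, b ∈ M, the geodesic distance satisfies d_M(a,b) ≤ C‖a − b‖. -/

import Mathlib

open MeasureTheory

noncomputable section

abbrev E3 : Type := EuclideanSpace ℝ (Fin 3)

/-- `ℝ × ℝ³` endowed with the Euclidean (ℓ²) norm, i.e. `ℝ⁴`. -/
abbrev PR : Type := WithLp 2 (ℝ × E3)

/-- The lengths of Lipschitz paths with values in `M = [α,β] × S²` joining `a` to `b`. -/
def MPathLengths (α β : ℝ) (a b : PR) : Set ℝ :=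
  {L | ∃ γ : ℝ → PR, (∃ K : NNReal, LipschitzOnWith K γ (Set.Icc 0 1)) ∧
    (∀ t ∈ Set.Icc (0 : ℝ) 1, (γ t).ofLp.1 ∈ Set.Icc α β ∧ ‖(γ t).ofLp.2‖ = 1) ∧
    γ 0 = a ∧ γ 1 = b ∧
    L = ∫ t in Set.Ioo (0 : ℝ) 1, ‖deriv γ t‖}

/-- The geodesic distance on `M = [α,β] × S²`. -/
def dM (α β : ℝ) (a b : PR) : ℝ := sInf (MPathLengths α β a b)

open Real RealInnerProductSpace

lemma le_of_sq_le' {x y : ℝ} (hx : 0 ≤ x) (hy : 0 ≤ y) (h : x ^ 2 ≤ y ^ 2) : x ≤ y := by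
  nlinarith

lemma eq_of_sq_eq {x y : ℝ} (hx : 0 ≤ x) (hy : 0 ≤ y) (h : x ^ 2 = y ^ 2) : x = y := by
  rw [← Real.sqrt_sq hx, h, Real.sqrt_sq hy]

lemma exists_unit_orthogonal (u : E3) : ∃ w : E3, ‖w‖ = 1 ∧ ⟪u, w⟫ = 0 := by
  rcases eq_or_ne u 0 with rfl | hu
  · exact ⟨EuclideanSpace.single 0 1, by simp [EuclideanSpace.norm_single], by simp⟩
  · have hne : (ℝ ∙ u)ᗮ ≠ ⊥ := by
      intro h
      have h1 : Module.finrank ℝ (ℝ ∙ u : Submodule ℝ E3) = 1 := finrank_span_singleton hu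
      have h2 := Submodule.finrank_add_finrank_orthogonal (K := (ℝ ∙ u : Submodule ℝ E3))
      rw [h, h1] at h2
      simp [finrank_euclideanSpace_fin] at h2
    obtain ⟨w', hw'mem, hw'⟩ := Submodule.exists_mem_ne_zero_of_ne_bot hne
    have hnorm : ‖w'‖ ≠ 0 := norm_ne_zero_iff.2 hw'
    refine ⟨‖w'‖⁻¹ • w', ?_, ?_⟩
    · rw [norm_smul, norm_inv, norm_norm, inv_mul_cancel₀ hnorm]
    · rw [real_inner_smul_right]
      have : ⟪u, w'⟫ = 0 :=
        (Submodule.mem_orthogonal _ _).1 hw'mem u (Submodule.mem_span_singleton_self u)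
      rw [this, mul_zero]

lemma norm_sq_orthonormal {u w : E3} (hu : ‖u‖ = 1) (hw : ‖w‖ = 1) (huw : ⟪u, w⟫ = 0)
    (x y : ℝ) : ‖x • u + y • w‖ ^ 2 = x ^ 2 + y ^ 2 := by
  rw [norm_add_sq_real, norm_smul, norm_smul, real_inner_smul_left, real_inner_smul_right, huw]
  simp only [Real.norm_eq_abs, mul_pow, sq_abs, hu, hw]
  ring

lemma sphere_axis {u v : E3} (hu : ‖u‖ = 1) (hv : ‖v‖ = 1) :
    ∃ w : E3, ‖w‖ = 1 ∧ ⟪u, w⟫ = 0 ∧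
      Real.cos (Real.arccos ⟪u, v⟫) • u + Real.sin (Real.arccos ⟪u, v⟫) • w = v := by
  set c : ℝ := ⟪u, v⟫ with hc
  have habs : |c| ≤ 1 := by
    have := abs_real_inner_le_norm u v
    rwa [hu, hv, one_mul] at this
  have hcos : Real.cos (Real.arccos c) = c :=
    Real.cos_arccos (neg_le_of_abs_le habs) (le_of_abs_le habs)
  have hsin : Real.sin (Real.arccos c) = Real.sqrt (1 - c ^ 2) := Real.sin_arccos c
  set p : E3 := v - c • u with hp
  have hpnormsq : ‖p‖ ^ 2 = 1 - c ^ 2 := by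
    rw [hp, norm_sub_sq_real, real_inner_smul_right, ← real_inner_comm v u, ← hc,
      norm_smul, hu, hv]
    simp only [Real.norm_eq_abs, sq_abs, mul_one, one_pow, mul_pow]
    ring
  have hpnorm : ‖p‖ = Real.sqrt (1 - c ^ 2) := by
    rw [← hpnormsq, Real.sqrt_sq (norm_nonneg p)]
  rcases eq_or_ne p 0 with hp0 | hp0
  · have hv' : v = c • u := by
      have := hp0
      rw [hp, sub_eq_zero] at this
      exact this
    have h1c : 1 - c ^ 2 = 0 := by
      have h0 : ‖p‖ ^ 2 = 0 := by rw [hp0]; simp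
      linarith [hpnormsq ▸ h0]
    obtain ⟨w, hw1, hw0⟩ := exists_unit_orthogonal u
    refine ⟨w, hw1, hw0, ?_⟩
    rw [hcos, hsin, h1c, Real.sqrt_zero, zero_smul, add_zero, hv']
  · refine ⟨‖p‖⁻¹ • p, ?_, ?_, ?_⟩
    · rw [norm_smul, norm_inv, norm_norm, inv_mul_cancel₀ (norm_ne_zero_iff.2 hp0)]
    · rw [real_inner_smul_right, hp, inner_sub_right, real_inner_smul_right,
        real_inner_self_eq_norm_sq, hu]
      simp [← hc]
    · rw [hcos, hsin, ← hpnorm, smul_smul,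
        mul_inv_cancel₀ (norm_ne_zero_iff.2 hp0), one_smul, hp]
      abel

lemma arccos_le_dist {u v : E3} (hu : ‖u‖ = 1) (hv : ‖v‖ = 1) :
    Real.arccos ⟪u, v⟫ ≤ π / 2 * ‖u - v‖ := by
  set c : ℝ := ⟪u, v⟫ with hc
  have habs : |c| ≤ 1 := by
    have := abs_real_inner_le_norm u v
    rwa [hu, hv, one_mul] at this
  set θ : ℝ := Real.arccos c with hθ
  have hθ0 : 0 ≤ θ := Real.arccos_nonneg c
  have hθπ : θ ≤ π := Real.arccos_le_pi c
  have hcos : Real.cos θ = c :=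
    Real.cos_arccos (neg_le_of_abs_le habs) (le_of_abs_le habs)
  have hsub : ‖u - v‖ ^ 2 = 2 - 2 * c := by
    rw [norm_sub_sq_real, hu, hv, ← hc]; ring
  have hsinhalf : Real.sin (θ / 2) ^ 2 = (1 - Real.cos θ) / 2 := by
    have h := Real.sin_sq_eq_half_sub (θ / 2)
    rw [show 2 * (θ / 2) = θ by ring] at h
    rw [h]; ring
  have hsinnn : 0 ≤ Real.sin (θ / 2) :=
    Real.sin_nonneg_of_nonneg_of_le_pi (by linarith) (by linarith [Real.pi_pos])
  have hnormeq : ‖u - v‖ = 2 * Real.sin (θ / 2) := by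
    apply eq_of_sq_eq (norm_nonneg _) (by linarith)
    rw [hsub, mul_pow, hsinhalf, hcos]; ring
  have hms := Real.mul_le_sin (x := θ / 2) (by linarith) (by linarith)
  have hπ := Real.pi_pos
  rw [hnormeq]
  have h2 : 2 / π * (θ / 2) = θ / π := by field_simp
  rw [h2] at hms
  have hθs : θ ≤ Real.sin (θ / 2) * π := (div_le_iff₀ hπ).1 hms
  nlinarith [hθs]

set_option maxHeartbeats 1000000 in
theorem stmt10 : ∃ C : ℝ, 0 < C ∧
    ∀ α β : ℝ, 0 < α → α ≤ β →
    ∀ a b : PR, (a.ofLp.1 ∈ Set.Icc α β ∧ ‖a.ofLp.2‖ = 1) → (b.ofLp.1 ∈ Set.Icc α β ∧ ‖b.ofLp.2‖ = 1) →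
      dM α β a b ≤ C * ‖a - b‖ := by
  refine ⟨4, by norm_num, ?_⟩
  intro α β hα hαβ a b ⟨ha1, ha2⟩ ⟨hb1, hb2⟩
  set u : E3 := a.ofLp.2 with hu
  set v : E3 := b.ofLp.2 with hv
  obtain ⟨w, hw1, hw0, hwv⟩ := sphere_axis (u := u) (v := v) ha2 hb2
  set θ : ℝ := Real.arccos ⟪u, v⟫ with hθdef
  have hθ0 : 0 ≤ θ := Real.arccos_nonneg _
  set d : ℝ := b.ofLp.1 - a.ofLp.1 with hd
  set L : (ℝ × E3) ≃L[ℝ] PR := (WithLp.prodContinuousLinearEquiv 2 ℝ ℝ E3).symm with hL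
  set F : ℝ → ℝ × E3 := fun t => (a.ofLp.1 + t * d, Real.cos (θ * t) • u + Real.sin (θ * t) • w)
    with hF
  set γ : ℝ → PR := fun t => L (F t) with hγ
  set F' : ℝ → ℝ × E3 := fun t =>
    (d, (-Real.sin (θ * t) * θ) • u + (Real.cos (θ * t) * θ) • w) with hF'
  have hFderiv : ∀ t : ℝ, HasDerivAt F (F' t) t := by
    intro t
    apply HasDerivAt.prodMk
    · simpa using (hasDerivAt_mul_const d (x := t)).const_add a.ofLp.1
    · have hlin : HasDerivAt (fun s : ℝ => θ * s) θ t := by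
        simpa using (hasDerivAt_id t).const_mul θ
      exact (hlin.cos.smul_const u).add (hlin.sin.smul_const w)
  have hγd : ∀ t : ℝ, HasDerivAt γ (L (F' t)) t := fun t =>
    (L.toContinuousLinearMap.hasFDerivAt).comp_hasDerivAt t (hFderiv t)
  have hderiveq : ∀ t : ℝ, deriv γ t = L (F' t) := fun t => (hγd t).deriv
  have hLfst : ∀ x : ℝ × E3, (L x).ofLp.1 = x.1 := fun x => by
    rw [hL]; simp
  have hLsnd : ∀ x : ℝ × E3, (L x).ofLp.2 = x.2 := fun x => by
    rw [hL]; simp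
  have hF'norm : ∀ t : ℝ, ‖L (F' t)‖ = Real.sqrt (d ^ 2 + θ ^ 2) := by
    intro t
    rw [WithLp.prod_norm_eq_of_L2]; simp only [WithLp.fst, WithLp.snd]
    congr 1
    rw [hLfst, hLsnd]
    have h2 : ‖(-Real.sin (θ * t) * θ) • u + (Real.cos (θ * t) * θ) • w‖ ^ 2
        = (-Real.sin (θ * t) * θ) ^ 2 + (Real.cos (θ * t) * θ) ^ 2 :=
      norm_sq_orthonormal ha2 hw1 hw0 _ _
    rw [hF', h2]
    have := Real.sin_sq_add_cos_sq (θ * t)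
    simp only [Real.norm_eq_abs, sq_abs]
    nlinarith [this]
  -- path constraints
  have hsphere : ∀ t : ℝ, ‖(γ t).ofLp.2‖ = 1 := by
    intro t
    rw [hγ]
    simp only [hLsnd]
    apply eq_of_sq_eq (norm_nonneg _) zero_le_one
    rw [norm_sq_orthonormal ha2 hw1 hw0, one_pow, add_comm]
    exact Real.sin_sq_add_cos_sq (θ * t)
  have hLeq : ∀ x : ℝ × E3, L x = (WithLp.equiv 2 (ℝ × E3)).symm x := by
    intro x; rw [hL]
    exact WithLp.prodContinuousLinearEquiv_symm_apply (p := 2) (𝕜 := ℝ) (α := ℝ) (β := E3) x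
  have hγ0 : γ 0 = a := by
    have hF0 : F 0 = (a.ofLp.1, a.ofLp.2) := by
      simp [hF, hu]
    rw [hγ]
    show L (F 0) = a
    rw [hF0, hLeq]
    exact (WithLp.equiv 2 (ℝ × E3)).symm_apply_eq.mpr rfl
  have hγ1 : γ 1 = b := by
    have hF1 : F 1 = (b.ofLp.1, b.ofLp.2) := by
      simp only [hF, mul_one, one_mul]
      rw [hwv, hd]
      have h1 : a.ofLp.1 + (b.ofLp.1 - a.ofLp.1) = b.ofLp.1 := by ring
      rw [h1, hv]
    rw [hγ]
    show L (F 1) = b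
    rw [hF1, hLeq]
    exact (WithLp.equiv 2 (ℝ × E3)).symm_apply_eq.mpr rfl
  -- Lipschitz
  set K : NNReal := ‖L (F' 0)‖₊ with hK
  have hlip : LipschitzWith K γ := by
    apply lipschitzWith_of_nnnorm_deriv_le (fun t => (hγd t).differentiableAt)
    intro t
    rw [hderiveq t]
    apply le_of_eq
    apply NNReal.coe_injective
    rw [coe_nnnorm, hF'norm, hK, coe_nnnorm, hF'norm]
  -- the length
  set Len : ℝ := ∫ t in Set.Ioo (0 : ℝ) 1, ‖deriv γ t‖ with hLen
  have hint : Len = Real.sqrt (d ^ 2 + θ ^ 2) := by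
    have h1 : Set.EqOn (fun t => ‖deriv γ t‖) (fun _ => Real.sqrt (d ^ 2 + θ ^ 2))
        (Set.Ioo (0 : ℝ) 1) := by
      intro t _
      simp only
      rw [hderiveq t, hF'norm t]
    rw [hLen, MeasureTheory.setIntegral_congr_fun measurableSet_Ioo h1,
      MeasureTheory.setIntegral_const]
    simp [Real.volume_Ioo]
  have hmem : Len ∈ MPathLengths α β a b := by
    refine ⟨γ, ⟨K, hlip.lipschitzOnWith⟩, ?_, hγ0, hγ1, rfl⟩
    intro t ht
    refine ⟨?_, hsphere t⟩
    have h1 : (γ t).ofLp.1 = a.ofLp.1 + t * d := by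
      rw [hγ]; exact hLfst (F t)
    rw [h1]
    obtain ⟨ht0, ht1⟩ := ht
    constructor
    · nlinarith [ha1.1, hb1.1]
    · nlinarith [ha1.2, hb1.2]
  have hbdd : BddBelow (MPathLengths α β a b) := by
    refine ⟨0, fun x hx => ?_⟩
    obtain ⟨γ', _, _, _, _, hxeq⟩ := hx
    rw [hxeq]
    exact MeasureTheory.integral_nonneg fun t => norm_nonneg _
  have hle : dM α β a b ≤ Len := csInf_le hbdd hmem
  -- bound the length
  have hnormab : ‖a - b‖ ^ 2 = (a.ofLp.1 - b.ofLp.1) ^ 2 + ‖u - v‖ ^ 2 := by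
    rw [WithLp.prod_norm_sq_eq_of_L2]
    rw [WithLp.sub_fst, WithLp.sub_snd]
    simp [Real.norm_eq_abs, sq_abs, hu, hv]
  have habn : 0 ≤ ‖a - b‖ := norm_nonneg _
  have hdle : |d| ≤ ‖a - b‖ := by
    apply le_of_sq_le' (abs_nonneg d) habn
    rw [sq_abs, hnormab, hd]
    nlinarith [sq_nonneg ‖u - v‖]
  have huvle : ‖u - v‖ ≤ ‖a - b‖ := by
    apply le_of_sq_le' (norm_nonneg _) habn
    rw [hnormab]
    nlinarith [sq_nonneg (a.ofLp.1 - b.ofLp.1)]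
  have hθle : θ ≤ π / 2 * ‖a - b‖ := by
    refine le_trans (arccos_le_dist ha2 hb2) ?_
    have := Real.pi_pos
    nlinarith
  have hπ4 : π ≤ 4 := by linarith [Real.pi_le_four]
  have hsqrtle : Real.sqrt (d ^ 2 + θ ^ 2) ≤ |d| + θ := by
    rw [show |d| + θ = Real.sqrt ((|d| + θ) ^ 2) from
      (Real.sqrt_sq (by positivity)).symm]
    apply Real.sqrt_le_sqrt
    nlinarith [abs_nonneg d, sq_abs d]
  calc dM α β a b ≤ Len := hle
    _ = Real.sqrt (d ^ 2 + θ ^ 2) := hint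
    _ ≤ |d| + θ := hsqrtle
    _ ≤ ‖a - b‖ + π / 2 * ‖a - b‖ := by linarith
    _ ≤ 4 * ‖a - b‖ := by nlinarith
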